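/- If an augmented marked graph S is strongly live (i.e. (N,M) is live for every potentially reachable marking M ∈ PR(S)), then PRG(S) is directed: for all M1, M2 ∈ PR(S), R((N,M1)) ∩ R((N,M2)) ≠ ∅. -/

import Mathlib

open scoped Classical

structure PetriNet (P T : Type) where
  pre : P → T → ℕ
  post : T → P → ℕ

namespace PetriNet

variable {P T : Type}

def enabled (N : PetriNet P T) (M : P → ℕ) (t : T) : Prop :=
  ∀ p, N.pre p t ≤ M p

def fire (N : PetriNet P T) (M : P → ℕ) (t : T) : P → ℕ :=
  fun p => M p - N.pre p t + N.post t p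

def feasible (N : PetriNet P T) : (P → ℕ) → List T → (P → ℕ) → Prop
  | M, [], M' => M' = M
  | M, t :: σ, M' => N.enabled M t ∧ feasible N (N.fire M t) σ M'

def reachable (N : PetriNet P T) (M0 M : P → ℕ) : Prop :=
  ∃ σ : List T, N.feasible M0 σ M

def inc (N : PetriNet P T) (p : P) (t : T) : ℤ :=
  (N.post t p : ℤ) - (N.pre p t : ℤ)

def potReach [Fintype T] (N : PetriNet P T) (M0 M : P → ℕ) : Prop :=
  ∃ Y : T → ℕ, ∀ p, (M p : ℤ) = (M0 p : ℤ) + ∑ t, N.inc p t * (Y t : ℤ)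

def live (N : PetriNet P T) (M0 : P → ℕ) : Prop :=
  ∀ (t : T) (M : P → ℕ), N.reachable M0 M →
    ∃ M', N.reachable M M' ∧ N.enabled M' t

def bounded (N : PetriNet P T) (M0 : P → ℕ) : Prop :=
  ∃ k : ℕ, ∀ M : P → ℕ, N.reachable M0 M → ∀ p, M p ≤ k

def reversible (N : PetriNet P T) (M0 : P → ℕ) : Prop :=
  ∀ M : P → ℕ, N.reachable M0 M → N.reachable M M0

def rev (N : PetriNet P T) : PetriNet P T :=
  ⟨fun p t => N.post t p, fun t p => N.pre p t⟩

def propR (N : PetriNet P T) (M0 : P → ℕ) : Prop :=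
  N.reversible M0 ∧ N.rev.reversible M0

def placePre [Fintype T] (N : PetriNet P T) (p : P) : Finset T :=
  Finset.univ.filter fun t => 0 < N.post t p

def placePost [Fintype T] (N : PetriNet P T) (p : P) : Finset T :=
  Finset.univ.filter fun t => 0 < N.pre p t

def transPre [Fintype P] (N : PetriNet P T) (t : T) : Finset P :=
  Finset.univ.filter fun p => 0 < N.pre p t

def transPost [Fintype P] (N : PetriNet P T) (t : T) : Finset P :=
  Finset.univ.filter fun p => 0 < N.post t p

def arc (N : PetriNet P T) : (P ⊕ T) → (P ⊕ T) → Prop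
  | Sum.inl p, Sum.inr t => 0 < N.pre p t
  | Sum.inr t, Sum.inl p => 0 < N.post t p
  | _, _ => False

def stronglyConnected (N : PetriNet P T) : Prop :=
  ∀ x y : P ⊕ T, Relation.ReflTransGen N.arc x y

def connectedNet (N : PetriNet P T) : Prop :=
  ∀ x y : P ⊕ T, Relation.ReflTransGen (fun a b => N.arc a b ∨ N.arc b a) x y

def ordinary (N : PetriNet P T) : Prop :=
  ∀ p t, N.pre p t ≤ 1 ∧ N.post t p ≤ 1

def isWMGle [Fintype T] (N : PetriNet P T) : Prop :=
  ∀ p, (N.placePre p).card ≤ 1 ∧ (N.placePost p).card ≤ 1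

def deadlock (N : PetriNet P T) (M : P → ℕ) : Prop :=
  ∀ t, ¬ N.enabled M t

end PetriNet


namespace PetriNet

variable {Q T : Type}

/-- The net obtained by removing the places of `R` together with their adjacent arcs. -/
def delPlaces (N : PetriNet Q T) (R : Finset Q) : PetriNet {p : Q // p ∉ R} T :=
  ⟨fun p t => N.pre p.1 t, fun t p => N.post t p.1⟩

/-- A marked graph: ordinary, and every place has exactly one input and one output
transition. -/
def isMarkedGraph {P : Type} [Fintype T] (N : PetriNet P T) : Prop :=
  N.ordinary ∧ ∀ p, (N.placePre p).card = 1 ∧ (N.placePost p).card = 1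

/-- An elementary directed path from node `x` to node `y`. -/
def elemPath {P : Type} (N : PetriNet P T) (x y : P ⊕ T) : Prop :=
  ∃ l : List (P ⊕ T), l.Chain' N.arc ∧ l.head? = some x ∧ l.getLast? = some y ∧ l.Nodup

/-- An elementary directed path from `x` to `y`, none of whose places is marked by `M`. -/
def elemPathUnmarked {P : Type} (N : PetriNet P T) (M : P → ℕ) (x y : P ⊕ T) : Prop :=
  ∃ l : List (P ⊕ T), l.Chain' N.arc ∧ l.head? = some x ∧ l.getLast? = some y ∧ l.Nodup ∧
    ∀ p : P, Sum.inl p ∈ l → M p = 0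

/-- `l` lists the nodes (each exactly once) of an elementary circuit. -/
def isElemCircuit {P : Type} (N : PetriNet P T) : List (P ⊕ T) → Prop
  | [] => False
  | x :: xs => (x :: xs).Nodup ∧ List.Chain N.arc x (xs ++ [x])

/-- Augmented marked graph with resource places `R`. -/
def isAMG [Fintype Q] [Fintype T] (N : PetriNet Q T) (M0 : Q → ℕ) (R : Finset Q) : Prop :=
  -- ordinary net
  N.ordinary ∧
  -- (H1) removing the resource places yields a marked graph
  isMarkedGraph (N.delPlaces R) ∧
  -- (H2) and paths of (H4)
  (∀ r ∈ R, ∃ D : Finset (T × T),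
    2 ≤ D.card ∧
    Set.InjOn Prod.fst (↑D : Set (T × T)) ∧
    Set.InjOn Prod.snd (↑D : Set (T × T)) ∧
    (∀ t : T, 0 < N.pre r t ↔ ∃ ab ∈ D, ab.1 = t) ∧
    (∀ t : T, 0 < N.post t r ↔ ∃ ab ∈ D, ab.2 = t) ∧
    (∀ ab ∈ D, ab.1 ≠ ab.2 →
      elemPath (N.delPlaces R) (Sum.inr ab.1) (Sum.inr ab.2)) ∧
    (∀ ab ∈ D, ab.1 ≠ ab.2 →
      elemPathUnmarked (N.delPlaces R) (fun p => M0 p.1) (Sum.inr ab.1) (Sum.inr ab.2))) ∧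
  -- (H3) each elementary circuit of the underlying marked graph is marked
  (∀ l : List ({p : Q // p ∉ R} ⊕ T), isElemCircuit (N.delPlaces R) l →
    ∃ p : {p : Q // p ∉ R}, Sum.inl p ∈ l ∧ 0 < M0 p.1) ∧
  -- (H4) each resource place is initially marked
  (∀ r ∈ R, 0 < M0 r)

end PetriNet

set_option linter.unusedSectionVars false

section AuxLemmas

namespace PetriNet

variable {Q T : Type} [Fintype Q] [Fintype T]




/-- Unique input transition of a place of the marked graph `G`. -/
lemma G_feeder {N : PetriNet Q T} {R : Finset Q}
    (hMG : isMarkedGraph (N.delPlaces R)) {q : Q} (hq : q ∉ R) :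
    ∃ u, 0 < N.post u q ∧ ∀ t, 0 < N.post t q → t = u := by
  obtain ⟨u, hu⟩ := Finset.card_eq_one.mp (hMG.2 ⟨q, hq⟩).1
  refine ⟨u, ?_, ?_⟩
  · have : u ∈ (N.delPlaces R).placePre ⟨q, hq⟩ := by
      rw [hu]; exact Finset.mem_singleton_self u
    exact (Finset.mem_filter.mp this).2
  · intro t ht
    have : t ∈ (N.delPlaces R).placePre ⟨q, hq⟩ := by
      exact Finset.mem_filter.mpr ⟨Finset.mem_univ _, ht⟩
    rw [hu] at this; simpa using this

/-- Unique output transition of a place of the marked graph `G`. -/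
lemma G_consumer {N : PetriNet Q T} {R : Finset Q}
    (hMG : isMarkedGraph (N.delPlaces R)) {q : Q} (hq : q ∉ R) :
    ∃ v, 0 < N.pre q v ∧ ∀ t, 0 < N.pre q t → t = v := by
  obtain ⟨v, hv⟩ := Finset.card_eq_one.mp (hMG.2 ⟨q, hq⟩).2
  refine ⟨v, ?_, ?_⟩
  · have : v ∈ (N.delPlaces R).placePost ⟨q, hq⟩ := by
      rw [hv]; exact Finset.mem_singleton_self v
    exact (Finset.mem_filter.mp this).2
  · intro t ht
    have : t ∈ (N.delPlaces R).placePost ⟨q, hq⟩ := by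
      exact Finset.mem_filter.mpr ⟨Finset.mem_univ _, ht⟩
    rw [hv] at this; simpa using this




/-- The weighted flow into/out of a `G`-place with feeder `u` and consumer `v`. -/
lemma balG {N : PetriNet Q T} {R : Finset Q} (hord : N.ordinary)
    (hMG : isMarkedGraph (N.delPlaces R)) {q : Q} (hq : q ∉ R)
    {u v : T} (hu : 0 < N.post u q) (hv : 0 < N.pre q v) (Z : T → ℕ) :
    ∑ t, N.inc q t * (Z t : ℤ) = (Z u : ℤ) - Z v := by
  obtain ⟨u', hu', huniq⟩ := G_feeder hMG hq
  obtain ⟨v', hv', hvuniq⟩ := G_consumer hMG hq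
  have huu : u = u' := huniq u hu
  have hvv : v = v' := hvuniq v hv
  subst huu; subst hvv
  have hpost : ∀ t, (N.post t q : ℤ) = if t = u then 1 else 0 := by
    intro t
    by_cases h : t = u
    · subst h
      have h1 := (hord q t).2
      have : N.post t q = 1 := le_antisymm h1 hu
      simp [this]
    · simp only [h, if_false]
      by_cases h2 : 0 < N.post t q
      · exact absurd (huniq t h2) h
      · omega
  have hpre : ∀ t, (N.pre q t : ℤ) = if t = v then 1 else 0 := by
    intro t
    by_cases h : t = v
    · subst h
      have h1 := (hord q t).1
      have : N.pre q t = 1 := le_antisymm h1 hv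
      simp [this]
    · simp only [h, if_false]
      by_cases h2 : 0 < N.pre q t
      · exact absurd (hvuniq t h2) h
      · omega
  have : ∀ t, N.inc q t * (Z t : ℤ)
      = (if t = u then (Z t : ℤ) else 0) - (if t = v then (Z t : ℤ) else 0) := by
    intro t
    simp only [inc, hpost t, hpre t]
    split_ifs <;> ring
  rw [Finset.sum_congr rfl (fun t _ => this t), Finset.sum_sub_distrib]
  simp [Finset.sum_ite_eq']

/-- In an AMG the all-ones vector is a T-invariant: each column of `I` sums to `0`. -/
lemma sum_inc_zero {N : PetriNet Q T} {M0 : Q → ℕ} {R : Finset Q}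
    (hAMG : N.isAMG M0 R) (p : Q) :
    ∑ t, N.inc p t = (0 : ℤ) := by
  obtain ⟨hord, hMG, hH2, -, -⟩ := hAMG
  by_cases hp : p ∈ R
  · obtain ⟨D, -, hinj1, hinj2, hpre, hpost, -, -⟩ := hH2 p hp
    have hpostsum : ∑ t, (N.post t p : ℤ) = (D.image Prod.snd).card := by
      have h1 : ∀ t, (N.post t p : ℤ) = if 0 < N.post t p then 1 else 0 := by
        intro t
        have := (hord p t).2
        by_cases h : 0 < N.post t p
        · have h2 : N.post t p = 1 := by omega
          simp [h, h2]
        · have h2 : N.post t p = 0 := by omega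
          simp [h, h2]
      rw [Finset.sum_congr rfl (fun t _ => h1 t), Finset.sum_ite, Finset.sum_const,
        Finset.sum_const]
      have : Finset.univ.filter (fun t => 0 < N.post t p) = D.image Prod.snd := by
        ext t
        simp only [Finset.mem_filter, Finset.mem_univ, true_and, Finset.mem_image]
        rw [hpost t]
      simp [this]
    have hpresum : ∑ t, (N.pre p t : ℤ) = (D.image Prod.fst).card := by
      have h1 : ∀ t, (N.pre p t : ℤ) = if 0 < N.pre p t then 1 else 0 := by
        intro t
        have := (hord p t).1
        by_cases h : 0 < N.pre p t
        · have h2 : N.pre p t = 1 := by omega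
          simp [h, h2]
        · have h2 : N.pre p t = 0 := by omega
          simp [h, h2]
      rw [Finset.sum_congr rfl (fun t _ => h1 t), Finset.sum_ite, Finset.sum_const,
        Finset.sum_const]
      have : Finset.univ.filter (fun t => 0 < N.pre p t) = D.image Prod.fst := by
        ext t
        simp only [Finset.mem_filter, Finset.mem_univ, true_and, Finset.mem_image]
        rw [hpre t]
      simp [this]
    have hc1 : (D.image Prod.snd).card = D.card := Finset.card_image_of_injOn hinj2
    have hc2 : (D.image Prod.fst).card = D.card := Finset.card_image_of_injOn hinj1
    simp only [inc, Finset.sum_sub_distrib, hpostsum, hpresum, hc1, hc2, sub_self]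
  · obtain ⟨u, hu, huniq⟩ := G_feeder hMG hp
    obtain ⟨v, hv, hvuniq⟩ := G_consumer hMG hp
    have := balG hord hMG hp hu hv (fun _ => 1)
    simpa using this

/-- Along an `M0`-unmarked path of `G` ending at a transition `b` with `Z b = 0`,
all places are `M`-empty and all transitions have `Z = 0`
(backward propagation of the marking equation `M0 = M + I·Z`). -/
lemma path_zero {N : PetriNet Q T} {R : Finset Q} (hord : N.ordinary)
    (hMG : isMarkedGraph (N.delPlaces R)) {M M0 : Q → ℕ} {Z : T → ℕ}
    (hbal : ∀ p, (M0 p : ℤ) = M p + ∑ t, N.inc p t * Z t) :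
    ∀ (L : List ({p : Q // p ∉ R} ⊕ T)) (b : T),
      L.Chain' (N.delPlaces R).arc → L.getLast? = some (Sum.inr b) →
      (∀ q : {p : Q // p ∉ R}, Sum.inl q ∈ L → M0 q.1 = 0) → Z b = 0 →
      ∀ x ∈ L, (∀ q, x = Sum.inl q → M q.1 = 0) ∧ (∀ v, x = Sum.inr v → Z v = 0) := by
  intro L
  induction L with
  | nil => intro b _ _ _ _ x hx; exact absurd hx List.not_mem_nil
  | cons x L' ih =>
    intro b hchain hlast hunm hZb x₀ hx₀
    cases L' with
    | nil =>
      have hx : x = Sum.inr b := by simpa using hlast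
      subst hx
      rcases List.mem_singleton.mp hx₀ with rfl
      constructor
      · intro q hq; exact absurd hq (by simp)
      · intro v hv
        have : v = b := by injection hv.symm
        subst this; exact hZb
    | cons y L'' =>
      have hchain2 := List.isChain_cons_cons.mp hchain
      have harcxy := hchain2.1
      have hchainT := hchain2.2
      have hlastT : (y :: L'').getLast? = some (Sum.inr b) := by
        rw [List.getLast?_cons_cons] at hlast; exact hlast
      have hunmT : ∀ q : {p : Q // p ∉ R}, Sum.inl q ∈ y :: L'' → M0 q.1 = 0 :=
        fun q hq => hunm q (List.mem_cons_of_mem _ hq)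
      have IH := ih b hchainT hlastT hunmT hZb
      rcases List.mem_cons.mp hx₀ with rfl | hmem
      · -- x₀ = x, the head
        constructor
        · rintro q rfl
          cases y with
          | inl q1 => exact absurd harcxy (by simp [arc])
          | inr w =>
            have hqw : 0 < N.pre q.1 w := harcxy
            have hZw : Z w = 0 := (IH (Sum.inr w) (List.mem_cons_self)).2 w rfl
            obtain ⟨u, hu, -⟩ := G_feeder hMG q.2
            have hb := hbal q.1
            rw [balG hord hMG q.2 hu hqw Z] at hb
            have hM0q : M0 q.1 = 0 := hunm q (List.mem_cons_self)
            rw [hM0q, hZw] at hb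
            omega
        · rintro v rfl
          cases y with
          | inr w => exact absurd harcxy (by simp [arc])
          | inl q1 =>
            have hvq : 0 < N.post v q1.1 := harcxy
            have hMq1 : M q1.1 = 0 := (IH (Sum.inl q1) (List.mem_cons_self)).1 q1 rfl
            cases L'' with
            | nil =>
              exfalso
              have : (Sum.inl q1 : {p : Q // p ∉ R} ⊕ T) = Sum.inr b := by simpa using hlastT
              exact absurd this (by simp)
            | cons z L''' =>
              have harcyz := (List.isChain_cons_cons.mp hchainT).1
              cases z with
              | inl q2 => exact absurd harcyz (by simp [arc])
              | inr w =>
                have hq1w : 0 < N.pre q1.1 w := harcyz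
                have hZw : Z w = 0 :=
                  (IH (Sum.inr w) (List.mem_cons_of_mem _ (List.mem_cons_self))).2 w rfl
                have hb := hbal q1.1
                rw [balG hord hMG q1.2 hvq hq1w Z] at hb
                have hM0q : M0 q1.1 = 0 := hunmT q1 (List.mem_cons_self)
                rw [hM0q, hMq1, hZw] at hb
                omega
      · exact IH x₀ hmem

/-- Every place on a path is either the head or is preceded by a transition `u`
(its feeder), where `u` is either the head or is itself preceded by a place of the path. -/
lemma path_pred {N : PetriNet Q T} {R : Finset Q} :
    ∀ (L : List ({p : Q // p ∉ R} ⊕ T)), L.Chain' (N.delPlaces R).arc →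
      ∀ q : {p : Q // p ∉ R}, Sum.inl q ∈ L →
        L.head? = some (Sum.inl q) ∨
        ∃ u, 0 < N.post u q.1 ∧
          (L.head? = some (Sum.inr u) ∨
            ∃ q' : {p : Q // p ∉ R}, Sum.inl q' ∈ L ∧ 0 < N.pre q'.1 u) := by
  intro L
  induction L with
  | nil => intro _ q hq; exact absurd hq List.not_mem_nil
  | cons x L' ih =>
    intro hchain q hq
    rcases List.mem_cons.mp hq with hx | hmem
    · exact Or.inl (by rw [List.head?_cons, hx])
    · cases L' with
      | nil => exact absurd hmem List.not_mem_nil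
      | cons y L'' =>
        have hchain2 := List.isChain_cons_cons.mp hchain
        have harcxy := hchain2.1
        rcases ih hchain2.2 q hmem with hh | ⟨u, hu, hh⟩
        · -- y = inl q
          have hy : y = Sum.inl q := by simpa using hh
          subst hy
          cases x with
          | inl q2 => exact absurd harcxy (by simp [arc])
          | inr u =>
            exact Or.inr ⟨u, harcxy, Or.inl (by simp)⟩
        · rcases hh with hh | ⟨q', hq', hpre⟩
          · -- y = inr u
            have hy : y = Sum.inr u := by simpa using hh
            subst hy
            cases x with
            | inr u2 => exact absurd harcxy (by simp [arc])
            | inl q2 =>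
              exact Or.inr ⟨u, hu, Or.inr ⟨q2, List.mem_cons_self, harcxy⟩⟩
          · exact Or.inr ⟨u, hu, Or.inr ⟨q', List.mem_cons_of_mem _ hq', hpre⟩⟩

/-- The transition ending a path is either the head or consumes some place of the path. -/
lemma path_last {N : PetriNet Q T} {R : Finset Q} :
    ∀ (L : List ({p : Q // p ∉ R} ⊕ T)), L.Chain' (N.delPlaces R).arc →
      ∀ b : T, L.getLast? = some (Sum.inr b) →
        L.head? = some (Sum.inr b) ∨
          ∃ q : {p : Q // p ∉ R}, Sum.inl q ∈ L ∧ 0 < N.pre q.1 b := by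
  intro L
  induction L with
  | nil => intro _ b hb; simp at hb
  | cons x L' ih =>
    intro hchain b hlast
    cases L' with
    | nil =>
      have hx : x = Sum.inr b := by simpa using hlast
      subst hx; exact Or.inl rfl
    | cons y L'' =>
      have hchain2 := List.isChain_cons_cons.mp hchain
      have hlastT : (y :: L'').getLast? = some (Sum.inr b) := by
        rw [List.getLast?_cons_cons] at hlast; exact hlast
      rcases ih hchain2.2 b hlastT with hh | ⟨q, hq, hpre⟩
      · have hy : y = Sum.inr b := by simpa using hh
        subst hy
        cases x with
        | inr u2 => exact absurd hchain2.1 (by simp [arc])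
        | inl q2 =>
          exact Or.inr ⟨q2, List.mem_cons_self, hchain2.1⟩
      · exact Or.inr ⟨q, List.mem_cons_of_mem _ hq, hpre⟩

/-- An empty siphon stays empty along any feasible sequence. -/
lemma siphon_empty {N : PetriNet Q T} (S : Set Q)
    (hsi : ∀ s ∈ S, ∀ u, 0 < N.post u s → ∃ s' ∈ S, 0 < N.pre s' u) :
    ∀ (σ : List T) (M X : Q → ℕ), (∀ s ∈ S, M s = 0) → N.feasible M σ X →
      ∀ s ∈ S, X s = 0 := by
  intro σ
  induction σ with
  | nil =>
    intro M X h hf s hs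
    have : X = M := hf
    rw [this]; exact h s hs
  | cons t σ' ih =>
    intro M X h hf s hs
    obtain ⟨hen, hrest⟩ := hf
    refine ih (N.fire M t) X ?_ hrest s hs
    intro s' hs'
    have hpost : N.post t s' = 0 := by
      by_contra hpos
      obtain ⟨s'', hs'', hpre⟩ := hsi s' hs' t (Nat.pos_of_ne_zero hpos)
      have := hen s''
      rw [h s'' hs''] at this
      omega
    have hpre0 : N.pre s' t ≤ M s' := hen s'
    simp [fire, h s' hs', hpost]

/-- Main lemma: if `M` is potentially reachable (witness `Y`) and `M0 = M + I·Z`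
with `Z ≥ 0`, then `M0` is reachable from `M`.  Strong induction on `∑ Z`:
either some transition in the support of `Z` is enabled (fire it), or the
blocking places generate an empty siphon, contradicting liveness of `M`. -/
lemma key {N : PetriNet Q T} {M0 : Q → ℕ} {R : Finset Q}
    (hAMG : N.isAMG M0 R)
    (hSL : ∀ M : Q → ℕ, N.potReach M0 M → N.live M) :
    ∀ (n : ℕ) (M : Q → ℕ) (Y Z : T → ℕ),
      (∀ p, (M p : ℤ) = M0 p + ∑ t, N.inc p t * Y t) →
      (∀ p, (M0 p : ℤ) = M p + ∑ t, N.inc p t * Z t) →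
      ∑ t, Z t = n →
      N.reachable M M0 := by
  intro n
  induction n using Nat.strong_induction_on with
  | _ n ih =>
  intro M Y Z hY hZ hsum
  obtain ⟨hord, hMG, hH2, hH3, hH4⟩ := hAMG
  by_cases hstep : ∃ t, 0 < Z t ∧ N.enabled M t
  · -- fire an enabled transition of the support of Z
    obtain ⟨t, htZ, hten⟩ := hstep
    have hfire : ∀ p, ((N.fire M t) p : ℤ) = M p + N.inc p t := by
      intro p
      have h1 : N.pre p t ≤ M p := hten p
      simp only [fire, inc]
      push_cast [h1]
      ring
    set Y' := fun t' => Y t' + (if t' = t then 1 else 0) with hY'def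
    set Z' := fun t' => Z t' - (if t' = t then 1 else 0) with hZ'def
    have hY'cast : ∀ t', (Y' t' : ℤ) = Y t' + (if t' = t then 1 else 0) := by
      intro t'
      by_cases h : t' = t <;> simp [hY'def, h]
    have hZ'cast : ∀ t', (Z' t' : ℤ) = Z t' - (if t' = t then 1 else 0) := by
      intro t'
      have hr : Z' t' = Z t' - (if t' = t then 1 else 0) := rfl
      rw [hr]
      by_cases h : t' = t
      · simp only [if_pos h]
        have h1 : (1:ℕ) ≤ Z t' := by rw [h]; exact htZ
        omega
      · simp only [if_neg h]
        simp
    have hY₂ : ∀ p, ((N.fire M t) p : ℤ) = M0 p + ∑ t', N.inc p t' * Y' t' := by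
      intro p
      rw [hfire p, hY p]
      have h2 : ∑ t', N.inc p t' * (Y' t' : ℤ)
          = ∑ t', N.inc p t' * Y t' + N.inc p t := by
        calc ∑ t', N.inc p t' * (Y' t' : ℤ)
            = ∑ t', (N.inc p t' * Y t'
                + (if t' = t then N.inc p t' else 0)) := by
              apply Finset.sum_congr rfl
              intro t' _
              rw [hY'cast t']
              by_cases h : t' = t <;> simp [h] <;> ring
          _ = ∑ t', N.inc p t' * Y t' + ∑ t', (if t' = t then N.inc p t' else 0) :=
              Finset.sum_add_distrib
          _ = _ := by simp [Finset.sum_ite_eq']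
      rw [h2]; ring
    have hZ₂ : ∀ p, (M0 p : ℤ) = (N.fire M t) p + ∑ t', N.inc p t' * Z' t' := by
      intro p
      rw [hfire p, hZ p]
      have h2 : ∑ t', N.inc p t' * (Z' t' : ℤ)
          = ∑ t', N.inc p t' * Z t' - N.inc p t := by
        calc ∑ t', N.inc p t' * (Z' t' : ℤ)
            = ∑ t', (N.inc p t' * Z t'
                - (if t' = t then N.inc p t' else 0)) := by
              apply Finset.sum_congr rfl
              intro t' _
              rw [hZ'cast t']
              by_cases h : t' = t <;> simp [h] <;> ring
          _ = ∑ t', N.inc p t' * Z t' - ∑ t', (if t' = t then N.inc p t' else 0) :=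
              Finset.sum_sub_distrib _ _
          _ = _ := by simp [Finset.sum_ite_eq']
      rw [h2]; ring
    have hsum' : ∑ t', Z' t' < n := by
      have hpt : ∀ t', Z t' = Z' t' + (if t' = t then 1 else 0) := by
        intro t'
        have hr : Z' t' = Z t' - (if t' = t then 1 else 0) := rfl
        rw [hr]
        by_cases h : t' = t
        · simp only [if_pos h]
          have h1 : (1:ℕ) ≤ Z t' := by rw [h]; exact htZ
          omega
        · simp only [if_neg h]
          omega
      have h2 : ∑ t', Z t' = ∑ t', Z' t' + 1 := by
        rw [Finset.sum_congr rfl (fun t' _ => hpt t'), Finset.sum_add_distrib]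
        congr 1
        simp [Finset.sum_ite_eq']
      omega
    obtain ⟨σ, hσ⟩ := ih (∑ t', Z' t') hsum' (N.fire M t) Y' Z' hY₂ hZ₂ rfl
    exact ⟨t :: σ, hten, hσ⟩
  · by_cases hall : ∀ t, Z t = 0
    · -- Z = 0, so M = M0
      have hM : M = M0 := by
        funext p
        have hb := hZ p
        have h0 : ∑ t, N.inc p t * (Z t : ℤ) = 0 := by
          apply Finset.sum_eq_zero
          intro t _
          rw [hall t]; simp
        rw [h0, add_zero] at hb
        exact_mod_cast hb.symm
      exact ⟨[], show M0 = M from hM.symm⟩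
    · -- blocked situation: build an empty siphon, contradict liveness of M
      exfalso
      push_neg at hall
      obtain ⟨t₀, ht₀'⟩ := hall
      have ht₀ : 0 < Z t₀ := Nat.pos_of_ne_zero ht₀'
      push_neg at hstep
      have hblocked : ∀ t, 0 < Z t → ∃ p, M p = 0 ∧ 0 < N.pre p t := by
        intro t ht
        have hne := hstep t ht
        have hx : ∃ p, M p < N.pre p t := by
          by_contra hcon
          push_neg at hcon
          exact hne (fun p => hcon p)
        obtain ⟨p, hp⟩ := hx
        have := (hord p t).1
        exact ⟨p, by omega, by omega⟩
      choose pt hpt0 hptpre using hblocked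
      choose D hcard hinj1 hinj2 hpreD hpostD hpaths hupaths using hH2
      simp only [elemPathUnmarked] at hupaths
      choose L hLchain hLhead hLlast hLnodup hLunm using hupaths
      -- the siphon
      set S : Set Q := {q | (∃ t, ∃ h : 0 < Z t, q = pt t h) ∨
        (∃ t, ∃ h : 0 < Z t, ∃ hR : pt t h ∈ R, ∃ ab, ∃ hab : ab ∈ D (pt t h) hR,
          ∃ hne : ab.1 ≠ ab.2, Z ab.2 = 0 ∧
          ∃ q' : {p : Q // p ∉ R}, q'.1 = q ∧
            Sum.inl q' ∈ L (pt t h) hR ab hab hne)} with hSdef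
      have hmemS : ∀ q, q ∈ S ↔ ((∃ t, ∃ h : 0 < Z t, q = pt t h) ∨
        (∃ t, ∃ h : 0 < Z t, ∃ hR : pt t h ∈ R, ∃ ab, ∃ hab : ab ∈ D (pt t h) hR,
          ∃ hne : ab.1 ≠ ab.2, Z ab.2 = 0 ∧
          ∃ q' : {p : Q // p ∉ R}, q'.1 = q ∧
            Sum.inl q' ∈ L (pt t h) hR ab hab hne)) := fun q => Iff.rfl
      -- S is empty at M
      have hSempty : ∀ s ∈ S, M s = 0 := by
        rintro s (⟨t, h, rfl⟩ | ⟨t, h, hR, ab, hab, hne, hZab, q', rfl, hmem⟩)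
        · exact hpt0 t h
        · have hp := path_zero hord hMG hZ (L (pt t h) hR ab hab hne) ab.2
            (hLchain (pt t h) hR ab hab hne) (hLlast (pt t h) hR ab hab hne)
            (hLunm (pt t h) hR ab hab hne) hZab (Sum.inl q') hmem
          exact hp.1 q' rfl
      -- S is a siphon
      have hsiphon : ∀ s ∈ S, ∀ u, 0 < N.post u s → ∃ s' ∈ S, 0 < N.pre s' u := by
        rintro s hs u hu
        rcases hs with ⟨t, h, rfl⟩ | ⟨t, h, hR, ab, hab, hne, hZab, q', rfl, hmem⟩
        · by_cases hR : pt t h ∈ R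
          · -- the blocking place is a resource
            obtain ⟨ab, hab, hab2⟩ := (hpostD (pt t h) hR u).mp hu
            by_cases hZu : 0 < Z ab.2
            · have hZu' : 0 < Z u := hab2 ▸ hZu
              exact ⟨pt u hZu', Or.inl ⟨u, hZu', rfl⟩, hptpre u hZu'⟩
            · have hZab0 : Z ab.2 = 0 := by omega
              by_cases heq : ab.1 = ab.2
              · have hpr : 0 < N.pre (pt t h) ab.1 :=
                  (hpreD (pt t h) hR ab.1).mpr ⟨ab, hab, rfl⟩
                refine ⟨pt t h, Or.inl ⟨t, h, rfl⟩, ?_⟩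
                rw [← hab2, ← heq]
                exact hpr
              · have hlast := hLlast (pt t h) hR ab hab heq
                have hchain := hLchain (pt t h) hR ab hab heq
                rcases path_last _ hchain ab.2 hlast with hh | ⟨q, hq, hpre⟩
                · exfalso
                  have hhead := hLhead (pt t h) hR ab hab heq
                  rw [hhead] at hh
                  have : (Sum.inr ab.1 : {p : Q // p ∉ R} ⊕ T) = Sum.inr ab.2 := by
                    injection hh
                  exact heq (by injection this)
                · refine ⟨q.1, Or.inr ⟨t, h, hR, ab, hab, heq, hZab0, q, rfl, hq⟩, ?_⟩
                  rw [← hab2]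
                  exact hpre
          · -- the blocking place is a G-place: its feeder is in the support
            obtain ⟨uf, huf, hufuniq⟩ := G_feeder hMG hR
            have huu : u = uf := hufuniq u hu
            have hb := hZ (pt t h)
            rw [balG hord hMG hR huf (hptpre t h) Z, hpt0 t h] at hb
            have hZuf : 0 < Z uf := by omega
            rw [huu]
            exact ⟨pt uf hZuf, Or.inl ⟨uf, hZuf, rfl⟩, hptpre uf hZuf⟩
        · -- a place of an unmarked path
          have hchain := hLchain (pt t h) hR ab hab hne
          have hhead := hLhead (pt t h) hR ab hab hne
          rcases path_pred _ hchain q' hmem with hh | ⟨u₀, hu₀, hrest⟩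
          · exfalso
            rw [hhead] at hh
            have : (Sum.inr ab.1 : {p : Q // p ∉ R} ⊕ T) = Sum.inl q' := by
              injection hh
            simp at this
          · obtain ⟨uf, huf, hufuniq⟩ := G_feeder hMG q'.2
            have h1 : u = uf := hufuniq u hu
            have h2 : u₀ = uf := hufuniq u₀ hu₀
            rcases hrest with hh | ⟨q'', hq'', hpre⟩
            · rw [hhead] at hh
              have h3 : (Sum.inr ab.1 : {p : Q // p ∉ R} ⊕ T) = Sum.inr u₀ := by
                injection hh
              have h4 : ab.1 = u₀ := by injection h3
              have hpr : 0 < N.pre (pt t h) ab.1 :=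
                (hpreD (pt t h) hR ab.1).mpr ⟨ab, hab, rfl⟩
              refine ⟨pt t h, Or.inl ⟨t, h, rfl⟩, ?_⟩
              rw [h1, ← h2, ← h4]
              exact hpr
            · refine ⟨q''.1, Or.inr ⟨t, h, hR, ab, hab, hne, hZab, q'', rfl, hq''⟩, ?_⟩
              rw [h1, ← h2]
              exact hpre
      -- contradiction with liveness of M
      have hlive := hSL M ⟨Y, hY⟩
      obtain ⟨M₃, ⟨σ₃, hfeas₃⟩, hen₃⟩ := hlive t₀ M ⟨[], rfl⟩
      have hM₃0 : M₃ (pt t₀ ht₀) = 0 :=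
        siphon_empty S hsiphon σ₃ M M₃ hSempty hfeas₃ (pt t₀ ht₀) (Or.inl ⟨t₀, ht₀, rfl⟩)
      have h5 := hen₃ (pt t₀ ht₀)
      rw [hM₃0] at h5
      have h6 := hptpre t₀ ht₀
      omega

/-- From every potentially reachable marking, `M0` is reachable. -/
lemma reach_M0 {N : PetriNet Q T} {M0 : Q → ℕ} {R : Finset Q}
    (hAMG : N.isAMG M0 R)
    (hSL : ∀ M : Q → ℕ, N.potReach M0 M → N.live M)
    {M : Q → ℕ} (hM : N.potReach M0 M) : N.reachable M M0 := by
  obtain ⟨Y, hY⟩ := hM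
  have hYle : ∀ t, Y t ≤ ∑ t', Y t' :=
    fun t => Finset.single_le_sum (fun _ _ => Nat.zero_le _) (Finset.mem_univ t)
  set Z : T → ℕ := fun t => (∑ t', Y t') - Y t with hZdef
  have hZeq : ∀ p, (M0 p : ℤ) = M p + ∑ t, N.inc p t * Z t := by
    intro p
    have hcast : ∀ t, (Z t : ℤ) = ((∑ t', Y t' : ℕ) : ℤ) - Y t := by
      intro t
      simp only [hZdef]
      have := hYle t
      omega
    have h1 : ∑ t, N.inc p t * (Z t : ℤ)
        = ((∑ t', Y t' : ℕ) : ℤ) * ∑ t, N.inc p t - ∑ t, N.inc p t * Y t := by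
      rw [Finset.mul_sum, ← Finset.sum_sub_distrib]
      apply Finset.sum_congr rfl
      intro t _
      rw [hcast t]; ring
    rw [h1, sum_inc_zero hAMG p, hY p]; ring
  exact key hAMG hSL (∑ t, Z t) M Y Z hY hZeq rfl

end PetriNet

end AuxLemmas



/-- If an AMG is strongly live, then its potential reachability graph is directed. -/
theorem stmt11 {Q T : Type} [Fintype Q] [Fintype T]
    (N : PetriNet Q T) (M0 : Q → ℕ) (R : Finset Q)
    (hAMG : N.isAMG M0 R)
    (hSL : ∀ M : Q → ℕ, N.potReach M0 M → N.live M) :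
    ∀ M1 M2 : Q → ℕ, N.potReach M0 M1 → N.potReach M0 M2 →
      ∃ M : Q → ℕ, N.reachable M1 M ∧ N.reachable M2 M := by
  intro M1 M2 h1 h2
  exact ⟨M0, PetriNet.reach_M0 hAMG hSL h1, PetriNet.reach_M0 hAMG hSL h2⟩
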